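/- Let r, K, v* be measurable on Ω with r ≥ 0, K > 0, v* ≥ 0, and K = γP + δQ with γ, δ > 0, P, Q > 0 measurable. Suppose ∫_Ω r v* (1 - v*/K) dx = 0, ∫_Ω (r/K)(v* - K)² dx > 0, and ∫_Ω r Q (v*/K - 1) dx > 0. Then ∫_Ω r P (1 - v*/K) dx > 0, and consequently c* := (∫_Ω P r v*/K dx)/(∫_Ω r P dx) < 1. -/
import Mathlib


open MeasureTheory

/-- Key computation of Lemma 8: the `P`-term is positive and hence the harvesting
threshold `c* = (∫ P r v*/K)/(∫ r P)` is less than one. -/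
theorem P_term_pos_and_cstar_lt_one {Ω : Type*} [MeasureSpace Ω]
    (r K P Q vstar : Ω → ℝ) (γ δ : ℝ) (hγ : 0 < γ) (hδ : 0 < δ)
    (hrm : Measurable r) (hKm : Measurable K) (hPm : Measurable P)
    (hQm : Measurable Q) (hvm : Measurable vstar)
    (hr : ∀ x, 0 ≤ r x) (hK : ∀ x, 0 < K x) (hP : ∀ x, 0 < P x) (hQpos : ∀ x, 0 < Q x)
    (hv : ∀ x, 0 ≤ vstar x)
    (hKPQ : ∀ x, K x = γ * P x + δ * Q x)
    (hint0 : Integrable (fun x => r x * vstar x * (1 - vstar x / K x)))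
    (hint1 : Integrable (fun x => (r x / K x) * (vstar x - K x) ^ 2))
    (hint2 : Integrable (fun x => r x * P x * (1 - vstar x / K x)))
    (hint3 : Integrable (fun x => r x * Q x * (vstar x / K x - 1)))
    (hint4 : Integrable (fun x => r x * P x))
    (hint5 : Integrable (fun x => P x * r x * (vstar x / K x)))
    (hrPpos : 0 < ∫ x, r x * P x)
    (hzero : (∫ x, r x * vstar x * (1 - vstar x / K x)) = 0)
    (hquad : 0 < ∫ x, (r x / K x) * (vstar x - K x) ^ 2)
    (hQterm : 0 < ∫ x, r x * Q x * (vstar x / K x - 1)) :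
    (0 < ∫ x, r x * P x * (1 - vstar x / K x)) ∧
      (∫ x, P x * r x * (vstar x / K x)) / (∫ x, r x * P x) < 1 := by
  have key : γ * ∫ x, r x * P x * (1 - vstar x / K x)
      = (∫ x, r x * vstar x * (1 - vstar x / K x))
        + (∫ x, (r x / K x) * (vstar x - K x) ^ 2)
        + δ * ∫ x, r x * Q x * (vstar x / K x - 1) := by
    have h01 : Integrable (fun x => r x * vstar x * (1 - vstar x / K x)
        + (r x / K x) * (vstar x - K x) ^ 2) := hint0.add hint1
    rw [← integral_const_mul, ← integral_const_mul, ← integral_add hint0 hint1,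
      ← integral_add h01 (hint3.const_mul δ)]
    refine integral_congr_ae (Filter.Eventually.of_forall fun x => ?_)
    have hK0 : K x ≠ 0 := (hK x).ne'
    have := hKPQ x
    field_simp
    linear_combination (r x * (vstar x - K x)) * this
  have hPterm : 0 < ∫ x, r x * P x * (1 - vstar x / K x) := by
    have : 0 < γ * ∫ x, r x * P x * (1 - vstar x / K x) := by
      rw [key, hzero]
      positivity
    nlinarith [this, hγ]
  refine ⟨hPterm, ?_⟩
  have hsplit : (∫ x, r x * P x * (1 - vstar x / K x))
      = (∫ x, r x * P x) - ∫ x, P x * r x * (vstar x / K x) := by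
    rw [← integral_sub hint4 hint5]
    exact integral_congr_ae (Filter.Eventually.of_forall fun x => by ring)
  rw [div_lt_one hrPpos]
  linarith [hsplit ▸ hPterm]
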